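/- Let M ≥ 2 be an even integer and let s_0, …, s_{M−1} ∈ ℝ^M be the rows of the modified DST matrix S. Then ∑_{ℓ=0}^{M/2−1} ⟨s_0, s_{2ℓ+1}⟩² = 1. -/

import Mathlib

/-- The `(k,n)` entry of the modified DST matrix `S ∈ ℝ^{M×M}` (row 0 replaced by the
constant row `√(1/M)`). -/
noncomputable def modDstEntry (M k n : ℕ) : ℝ :=
  if k = 0 then Real.sqrt (1 / M)
  else Real.sqrt (2 / M) * Real.sin (Real.pi / M * k * (n + 1 / 2))

lemma sin_mul_sin' (a b : ℝ) :
    Real.sin a * Real.sin b = (Real.cos (a - b) - Real.cos (a + b)) / 2 := by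
  rw [Real.cos_sub, Real.cos_add]; ring

lemma cos_sum_zero (N : ℕ) (j : ℤ) (hj : ¬ ((2 * (N : ℤ)) ∣ j)) :
    ∑ ℓ ∈ Finset.range N, Real.cos (Real.pi * j * (2 * (ℓ : ℝ) + 1) / (2 * N)) = 0 := by
  rcases eq_or_ne N 0 with rfl | hN
  · simp
  have hNR : (N : ℝ) ≠ 0 := Nat.cast_ne_zero.mpr hN
  set θ : ℝ := Real.pi * j / (2 * N) with hθ
  have harg : ∀ ℓ : ℕ, Real.pi * j * (2 * (ℓ : ℝ) + 1) / (2 * N) = θ * (2 * ℓ + 1) := by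
    intro ℓ; rw [hθ]; field_simp
  have hsin : Real.sin θ ≠ 0 := by
    intro h
    rw [Real.sin_eq_zero_iff] at h
    obtain ⟨k, hk⟩ := h
    apply hj
    refine ⟨k, ?_⟩
    have hπ := Real.pi_ne_zero
    rw [hθ] at hk
    field_simp at hk
    have : (j : ℝ) = 2 * N * k := mul_left_cancel₀ hπ (by linear_combination (-Real.pi) * hk)
    exact_mod_cast this
  have key : (∑ ℓ ∈ Finset.range N, Real.cos (θ * (2 * ℓ + 1))) * (2 * Real.sin θ) = 0 := by
    rw [Finset.sum_mul]
    have step : ∀ ℓ ∈ Finset.range N, Real.cos (θ * (2 * (ℓ : ℝ) + 1)) * (2 * Real.sin θ)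
        = Real.sin (2 * ((ℓ : ℝ) + 1) * θ) - Real.sin (2 * (ℓ : ℝ) * θ) := by
      intro ℓ _
      have h1 := Real.sin_add (θ * (2 * (ℓ : ℝ) + 1)) θ
      have h2 := Real.sin_sub (θ * (2 * (ℓ : ℝ) + 1)) θ
      have e1 : θ * (2 * (ℓ : ℝ) + 1) + θ = 2 * ((ℓ : ℝ) + 1) * θ := by ring
      have e2 : θ * (2 * (ℓ : ℝ) + 1) - θ = 2 * (ℓ : ℝ) * θ := by ring
      rw [e1] at h1; rw [e2] at h2
      rw [h1, h2]; ring
    rw [Finset.sum_congr rfl step]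
    have tel := Finset.sum_range_sub (fun ℓ : ℕ => Real.sin (2 * (ℓ : ℝ) * θ)) N
    simp only [Nat.cast_add, Nat.cast_one] at tel
    rw [tel]
    have : 2 * (N : ℝ) * θ = j * Real.pi := by rw [hθ]; field_simp
    rw [this]
    simp [Real.sin_int_mul_pi]
  have h2s : (2 * Real.sin θ) ≠ 0 := mul_ne_zero two_ne_zero hsin
  calc ∑ ℓ ∈ Finset.range N, Real.cos (Real.pi * j * (2 * (ℓ : ℝ) + 1) / (2 * N))
      = ∑ ℓ ∈ Finset.range N, Real.cos (θ * (2 * ℓ + 1)) :=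
        Finset.sum_congr rfl fun ℓ _ => by rw [harg]
    _ = 0 := by
        have := mul_eq_zero.mp key
        tauto

set_option maxHeartbeats 1000000 in
/-- Lemma 1, part 2: `∑_{ℓ=0}^{M/2−1} ⟨s₀, s_{2ℓ+1}⟩² = 1`. -/
theorem modDst_sum_sq_inner (M : ℕ) (hM : 2 ≤ M) (hEven : Even M) :
    ∑ ℓ ∈ Finset.range (M / 2),
        (∑ n ∈ Finset.range M, modDstEntry M 0 n * modDstEntry M (2 * ℓ + 1) n) ^ 2 = 1 := by
  obtain ⟨N, rfl⟩ : ∃ N, M = 2 * N := by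
    obtain ⟨k, hk⟩ := hEven; exact ⟨k, by omega⟩
  have hN : 1 ≤ N := by omega
  have hNR : (0 : ℝ) < (N : ℝ) := by exact_mod_cast hN
  have hdiv : 2 * N / 2 = N := by omega
  rw [hdiv]
  set a : ℕ → ℕ → ℝ := fun ℓ n => Real.pi / (2 * N) * (2 * ℓ + 1) * (n + 1 / 2) with ha
  have hentry : ∀ ℓ n : ℕ, modDstEntry (2 * N) 0 n * modDstEntry (2 * N) (2 * ℓ + 1) n
      = Real.sqrt (1 / (2 * N)) * Real.sqrt (2 / (2 * N)) * Real.sin (a ℓ n) := by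
    intro ℓ n
    simp only [modDstEntry, if_pos rfl, if_neg (by omega : ¬ (2 * ℓ + 1 = 0)), ha]
    push_cast
    ring
  have hc2 : (Real.sqrt (1 / (2 * (N : ℝ))) * Real.sqrt (2 / (2 * N))) ^ 2 = 1 / (2 * N ^ 2) := by
    rw [mul_pow, Real.sq_sqrt (by positivity), Real.sq_sqrt (by positivity)]
    field_simp
  have hT : ∀ ℓ : ℕ, (∑ n ∈ Finset.range (2 * N),
        modDstEntry (2 * N) 0 n * modDstEntry (2 * N) (2 * ℓ + 1) n) ^ 2
      = 1 / (2 * (N : ℝ) ^ 2) *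
        ∑ n ∈ Finset.range (2 * N), ∑ m ∈ Finset.range (2 * N),
          ((Real.cos (a ℓ n - a ℓ m) - Real.cos (a ℓ n + a ℓ m)) / 2) := by
    intro ℓ
    rw [Finset.sum_congr rfl fun n _ => hentry ℓ n, ← Finset.mul_sum, mul_pow, hc2]
    congr 1
    rw [pow_two (∑ n ∈ Finset.range (2 * N), Real.sin (a ℓ n)), Finset.sum_mul_sum]
    exact Finset.sum_congr rfl fun n _ => Finset.sum_congr rfl fun m _ => sin_mul_sin' _ _
  have hd : ∀ n ∈ Finset.range (2 * N), ∀ m ∈ Finset.range (2 * N),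
      ∑ ℓ ∈ Finset.range N, Real.cos (a ℓ n - a ℓ m)
      = if n = m then (N : ℝ) else 0 := by
    intro n hn m hm
    simp only [Finset.mem_range] at hn hm
    rcases eq_or_ne n m with rfl | hnm
    · simp
    · rw [if_neg hnm]
      have harg : ∀ ℓ : ℕ, a ℓ n - a ℓ m
          = Real.pi * (((n : ℤ) - m : ℤ) : ℝ) * (2 * (ℓ : ℝ) + 1) / (2 * N) := by
        intro ℓ; simp only [ha]; push_cast; ring
      rw [Finset.sum_congr rfl fun ℓ _ => by rw [harg ℓ]]
      apply cos_sum_zero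
      intro hdvd
      have habs : |(n : ℤ) - m| < 2 * N := by
        rw [abs_lt]; constructor <;> omega
      have := Int.eq_zero_of_abs_lt_dvd hdvd habs
      omega
  have hs : ∀ n ∈ Finset.range (2 * N), ∀ m ∈ Finset.range (2 * N),
      ∑ ℓ ∈ Finset.range N, Real.cos (a ℓ n + a ℓ m)
      = if n + m + 1 = 2 * N then -(N : ℝ) else 0 := by
    intro n hn m hm
    simp only [Finset.mem_range] at hn hm
    rcases eq_or_ne (n + m + 1) (2 * N) with heq | hne
    · rw [if_pos heq]
      have harg : ∀ ℓ : ℕ, a ℓ n + a ℓ m = (ℓ : ℝ) * (2 * Real.pi) + Real.pi := by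
        intro ℓ
        have hsum : (n : ℝ) + m + 1 = 2 * N := by exact_mod_cast congrArg (Nat.cast : ℕ → ℝ) heq
        simp only [ha]
        field_simp
        linear_combination 2 * hsum
      rw [Finset.sum_congr rfl fun ℓ _ => by
        rw [harg ℓ, Real.cos_add_pi, Real.cos_nat_mul_two_pi]]
      simp
    · rw [if_neg hne]
      have harg : ∀ ℓ : ℕ, a ℓ n + a ℓ m
          = Real.pi * (((n : ℤ) + m + 1 : ℤ) : ℝ) * (2 * (ℓ : ℝ) + 1) / (2 * N) := by
        intro ℓ; simp only [ha]; push_cast; ring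
      rw [Finset.sum_congr rfl fun ℓ _ => by rw [harg ℓ]]
      apply cos_sum_zero
      intro hdvd
      obtain ⟨c, hc⟩ := hdvd
      have hNZ : (1 : ℤ) ≤ (N : ℤ) := by exact_mod_cast hN
      have hnZ : (n : ℤ) < 2 * (N : ℤ) := by exact_mod_cast hn
      have hmZ : (m : ℤ) < 2 * (N : ℤ) := by exact_mod_cast hm
      have hneZ : ((n : ℤ) + m + 1) ≠ 2 * (N : ℤ) := by exact_mod_cast fun h => hne (by exact_mod_cast h)
      rcases lt_trichotomy c 1 with h | h | h
      · have hle : 2 * (N : ℤ) * c ≤ 0 :=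
          mul_nonpos_of_nonneg_of_nonpos (by omega) (by omega)
        have : (0 : ℤ) ≤ (n : ℤ) + m := by positivity
        linarith [hc, hle, this]
      · rw [h, mul_one] at hc
        exact hneZ hc
      · have hge : 2 * (N : ℤ) * 2 ≤ 2 * (N : ℤ) * c :=
          mul_le_mul_of_nonneg_left (by omega) (by omega)
        linarith [hc, hge, hnZ, hmZ]
  calc ∑ ℓ ∈ Finset.range N, (∑ n ∈ Finset.range (2 * N),
        modDstEntry (2 * N) 0 n * modDstEntry (2 * N) (2 * ℓ + 1) n) ^ 2
      = 1 / (2 * (N : ℝ) ^ 2) * ∑ ℓ ∈ Finset.range N,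
          ∑ n ∈ Finset.range (2 * N), ∑ m ∈ Finset.range (2 * N),
            ((Real.cos (a ℓ n - a ℓ m) - Real.cos (a ℓ n + a ℓ m)) / 2) := by
        rw [Finset.mul_sum]
        exact Finset.sum_congr rfl fun ℓ _ => hT ℓ
    _ = 1 / (2 * (N : ℝ) ^ 2) * ∑ n ∈ Finset.range (2 * N), ∑ m ∈ Finset.range (2 * N),
          ∑ ℓ ∈ Finset.range N,
            ((Real.cos (a ℓ n - a ℓ m) - Real.cos (a ℓ n + a ℓ m)) / 2) := by
        congr 1
        rw [Finset.sum_comm]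
        exact Finset.sum_congr rfl fun n _ => Finset.sum_comm
    _ = 1 / (2 * (N : ℝ) ^ 2) * ∑ n ∈ Finset.range (2 * N), ∑ m ∈ Finset.range (2 * N),
          (((if n = m then (N : ℝ) else 0) - (if n + m + 1 = 2 * N then -(N : ℝ) else 0)) / 2) := by
        congr 1
        refine Finset.sum_congr rfl fun n hn => Finset.sum_congr rfl fun m hm => ?_
        rw [← hd n hn m hm, ← hs n hn m hm, ← Finset.sum_sub_distrib, ← Finset.sum_div]
    _ = 1 / (2 * (N : ℝ) ^ 2) * ∑ n ∈ Finset.range (2 * N),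
          ((N : ℝ) / 2 + (N : ℝ) / 2) := by
        congr 1
        refine Finset.sum_congr rfl fun n hn => ?_
        simp only [Finset.mem_range] at hn
        have hsplit : ∀ m ∈ Finset.range (2 * N),
            (((if n = m then (N : ℝ) else 0) - (if n + m + 1 = 2 * N then -(N : ℝ) else 0)) / 2)
            = (if m = n then (N : ℝ) / 2 else 0) + (if m = 2 * N - 1 - n then (N : ℝ) / 2 else 0) := by
          intro m hmem
          simp only [Finset.mem_range] at hmem
          split_ifs <;> first | ring1 | (exfalso; omega)
        rw [Finset.sum_congr rfl hsplit, Finset.sum_add_distrib,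
          Finset.sum_ite_eq' (Finset.range (2 * N)) n,
          Finset.sum_ite_eq' (Finset.range (2 * N)) (2 * N - 1 - n)]
        rw [if_pos (Finset.mem_range.mpr hn), if_pos (Finset.mem_range.mpr (by omega))]
    _ = 1 := by
        rw [Finset.sum_const, Finset.card_range]
        push_cast
        field_simp
        ring
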